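/- Let h ∈ ℂ^L and s ∈ ℂ^N, set x = Fᴴ s, and let x̃ ∈ ℂ^{N+P} be the cyclic-prefixed sequence obtained by prepending to x its own last P entries. Then F · (T(h) x̃) = √N · diag(F pad(h)) · s; i.e., on each subcarrier k the receive signal equals √N (F pad(h))_k s_k, so the OFDM system splits into N orthogonal ISI-free scalar subcarriers. -/

import Mathlib

open Matrix

/-- The unitary `N`-point DFT matrix. -/
noncomputable def dft (N : ℕ) : Matrix (Fin N) (Fin N) ℂ :=
  Matrix.of fun k n : Fin N =>
    ((1 / Real.sqrt N : ℝ) : ℂ) *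
      Complex.exp (-2 * (Real.pi : ℂ) * Complex.I * ((k : ℕ) : ℂ) * ((n : ℕ) : ℂ) / (N : ℂ))

/-- Cyclic convolution on `ℂ^N`. -/
noncomputable def cconv {N : ℕ} (c x : Fin N → ℂ) : Fin N → ℂ := fun n => ∑ m, c m * x (n - m)

/-- Zero-padding of `h ∈ ℂ^L` to length `N`. -/
noncomputable def pad (N : ℕ) {L : ℕ} (hLN : L ≤ N) (h : Fin L → ℂ) : Fin N → ℂ :=
  fun n => if hn : (n : ℕ) < L then h ⟨n, hn⟩ else 0

/-- Toeplitz channel matrix `T(h) ∈ ℂ^{N×(N+P)}`. -/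
noncomputable def toep (N : ℕ) {L : ℕ} (P : ℕ) (h : Fin L → ℂ) : Matrix (Fin N) (Fin (N + P)) ℂ :=
  Matrix.of fun (n : Fin N) (m : Fin (N + P)) =>
    if hk : 0 ≤ (P : ℤ) + (n : ℕ) - (m : ℕ) ∧ (P : ℤ) + (n : ℕ) - (m : ℕ) ≤ (L : ℤ) - 1
    then h ⟨((P : ℤ) + (n : ℕ) - (m : ℕ)).toNat, by omega⟩ else 0

/-- First `P` columns of `T(h)`. -/
noncomputable def toepP (N : ℕ) {L : ℕ} (P : ℕ) (h : Fin L → ℂ) : Matrix (Fin N) (Fin P) ℂ :=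
  Matrix.of fun n m => toep N P h n ⟨(m : ℕ), by have := m.isLt; omega⟩

/-- Last `N` entries of `w ∈ ℂ^{N+P}`. -/
noncomputable def wStar (N P : ℕ) (w : Fin (N + P) → ℂ) : Fin N → ℂ :=
  fun n => w ⟨P + (n : ℕ), by have := n.isLt; omega⟩

/-- First `P` entries of `w` minus the last `P` entries of `w*`. -/
noncomputable def deltaP (N P : ℕ) (hPN : P ≤ N) (w : Fin (N + P) → ℂ) : Fin P → ℂ :=
  fun m => w ⟨(m : ℕ), by have := m.isLt; omega⟩ -
    wStar N P w ⟨N - P + (m : ℕ), by have := m.isLt; omega⟩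

/-- Cyclic-prefixed sequence: prepend the last `P` entries of `x` to `x`. -/
noncomputable def cyclicPrefix (N P : ℕ) (hPN : P ≤ N) (x : Fin N → ℂ) : Fin (N + P) → ℂ :=
  fun m => if hm : (m : ℕ) < P then x ⟨N - P + (m : ℕ), by omega⟩
           else x ⟨(m : ℕ) - P, by have := m.isLt; omega⟩

/-- Effective jammer channel matrix `𝗝[k] = [√N ĵ[k], R[k]]`. -/
noncomputable def effJ (N : ℕ) {L : ℕ} (P B : ℕ) (hLN : L ≤ N) (h : Fin B → Fin L → ℂ)
    (k : Fin N) : Matrix (Fin B) (Fin (P + 1)) ℂ :=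
  Matrix.of fun b : Fin B =>
    Fin.cons ((Real.sqrt N : ℂ) * (dft N *ᵥ pad N hLN (h b)) k)
      (fun m : Fin P => Matrix.vecMul (dft N k) (toepP N P (h b)) m)

set_option maxHeartbeats 1000000

/- ### auxiliary lemmas -/

noncomputable def efn (N : ℕ) (j : ℤ) : ℂ :=
  Complex.exp (2 * Real.pi * Complex.I * j / N)

lemma efn_add (N : ℕ) (a b : ℤ) : efn N (a + b) = efn N a * efn N b := by
  rw [efn, efn, efn, ← Complex.exp_add]; congr 1; push_cast; ring

lemma efn_N_mul (N : ℕ) (hN : 0 < N) (t : ℤ) : efn N ((N : ℤ) * t) = 1 := by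
  rw [efn]
  have hN' : (N : ℂ) ≠ 0 := by exact_mod_cast hN.ne'
  have : (2 * Real.pi * Complex.I * ((N:ℤ) * t : ℤ) / N : ℂ) = t * (2 * Real.pi * Complex.I) := by
    push_cast; field_simp
  rw [this, Complex.exp_int_mul_two_pi_mul_I]

lemma efn_congr (N : ℕ) (hN : 0 < N) {a b : ℤ} (hab : (N : ℤ) ∣ a - b) : efn N a = efn N b := by
  obtain ⟨t, ht⟩ := hab
  have : a = b + (N:ℤ) * t := by omega
  rw [this, efn_add, efn_N_mul N hN, mul_one]

lemma efn_pow (N : ℕ) (j : ℤ) (n : ℕ) : efn N (j * n) = (efn N j) ^ n := by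
  rw [efn, efn, ← Complex.exp_nat_mul]; congr 1; push_cast; ring

lemma sum_efn (N : ℕ) (hN : 0 < N) (j : ℤ) :
    ∑ n : Fin N, efn N (j * n) = if (N : ℤ) ∣ j then (N : ℂ) else 0 := by
  simp only [efn_pow]
  rw [Fin.sum_univ_eq_sum_range]
  by_cases hdvd : (N : ℤ) ∣ j
  · obtain ⟨t, ht⟩ := hdvd
    have h1 : efn N j = 1 := by rw [ht, efn_N_mul N hN]
    rw [if_pos ⟨t, ht⟩]
    simp [h1]
  · rw [if_neg hdvd]
    have hne : efn N j ≠ 1 := by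
      intro he
      rw [efn, Complex.exp_eq_one_iff] at he
      obtain ⟨n, hn⟩ := he
      have hN' : (N : ℂ) ≠ 0 := by exact_mod_cast hN.ne'
      have hpi : (Real.pi : ℂ) ≠ 0 := by exact_mod_cast Real.pi_ne_zero
      field_simp at hn
      have hj : (j : ℂ) = (n * N : ℤ) := by
        push_cast
        have h2 : (2 * (Real.pi:ℂ) * Complex.I) ≠ 0 := by
          simp [hpi, Complex.I_ne_zero]
        apply mul_left_cancel₀ h2
        linear_combination (2 * (Real.pi:ℂ) * Complex.I) * hn
      have hj' : j = n * N := by exact_mod_cast hj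
      exact hdvd (hj' ▸ dvd_mul_left (N:ℤ) n)
    rw [geom_sum_eq hne]
    have : efn N j ^ N = 1 := by rw [← efn_pow, mul_comm, efn_N_mul N hN]
    rw [this, sub_self, zero_div]

lemma dft_apply_efn (N : ℕ) (k n : Fin N) :
    dft N k n = ((1 / Real.sqrt N : ℝ) : ℂ) * efn N (-((k : ℕ) * (n : ℕ))) := by
  rw [dft, of_apply, efn]
  congr 1
  congr 1
  push_cast
  ring

lemma dft_conj_efn (N : ℕ) (k n : Fin N) :
    (starRingEnd ℂ) (dft N k n) = ((1 / Real.sqrt N : ℝ) : ℂ) * efn N ((k : ℕ) * (n : ℕ)) := by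
  rw [dft_apply_efn, _root_.map_mul, Complex.conj_ofReal, efn, efn, ← Complex.exp_conj]
  congr 1
  simp [map_div₀, Complex.conj_ofReal, map_ofNat]

lemma sqrt_mul_self' (N : ℕ) : ((Real.sqrt N : ℝ) : ℂ) * ((Real.sqrt N : ℝ) : ℂ) = (N : ℂ) := by
  rw [← Complex.ofReal_mul, Real.mul_self_sqrt (Nat.cast_nonneg N)]
  norm_cast

lemma key_sum (N : ℕ) (hN : 0 < N) (k k' : Fin N) :
    ∑ n : Fin N, efn N (((k' : ℕ) - (k : ℕ) : ℤ) * n) = if k' = k then (N : ℂ) else 0 := by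
  rw [sum_efn N hN]
  by_cases hkk : k' = k
  · simp [hkk]
  · rw [if_neg, if_neg hkk]
    intro hdvd
    have h1 := k.isLt; have h2 := k'.isLt
    have heq : ((k' : ℕ) : ℤ) - (k : ℕ) = 0 :=
      Int.eq_zero_of_abs_lt_dvd hdvd (by rw [abs_lt]; omega)
    exact hkk (Fin.ext (by omega))

/-- F Fᴴ = 1 applied to s -/
lemma dft_dft_conj (N : ℕ) (hN : 0 < N) (s : Fin N → ℂ) (k : Fin N) :
    (dft N *ᵥ ((dft N)ᴴ *ᵥ s)) k = s k := by
  have hsN : (Real.sqrt N : ℂ) ≠ 0 := by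
    have : Real.sqrt N ≠ 0 := Real.sqrt_ne_zero'.mpr (by exact_mod_cast hN)
    exact_mod_cast this
  simp only [mulVec, dotProduct, conjTranspose_apply, ← starRingEnd_apply]
  simp only [Finset.mul_sum]
  rw [Finset.sum_comm]
  have hterm : ∀ k' : Fin N, ∀ n : Fin N,
      dft N k n * ((starRingEnd ℂ) (dft N k' n) * s k')
        = (((1 / Real.sqrt N : ℝ) : ℂ) * ((1 / Real.sqrt N : ℝ) : ℂ) * s k')
            * efn N (((k' : ℕ) - (k : ℕ) : ℤ) * n) := by
    intro k' n
    have harg : ((((k':ℕ):ℤ) - (k:ℕ)) * (n:ℕ))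
        = (-(((k:ℕ):ℤ) * (n:ℕ)) + ((k':ℕ):ℤ) * (n:ℕ)) := by ring
    rw [dft_apply_efn, dft_conj_efn, harg, efn_add]
    ring
  have hinner : ∀ k' : Fin N,
      (∑ n : Fin N, dft N k n * ((starRingEnd ℂ) (dft N k' n) * s k'))
        = (((1 / Real.sqrt N : ℝ) : ℂ) * ((1 / Real.sqrt N : ℝ) : ℂ) * s k')
            * (if k' = k then (N:ℂ) else 0) := by
    intro k'
    rw [← key_sum N hN k k', Finset.mul_sum]
    exact Finset.sum_congr rfl fun n _ => hterm k' n
  rw [Finset.sum_congr rfl fun k' _ => hinner k']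
  rw [Finset.sum_eq_single k (fun b _ hb => by rw [if_neg hb, mul_zero])
    (fun hk => absurd (Finset.mem_univ k) hk), if_pos rfl]
  have h1 : ((1 / Real.sqrt N : ℝ):ℂ) * ((1 / Real.sqrt N : ℝ):ℂ) * (N:ℂ) = 1 := by
    push_cast
    rw [div_mul_div_comm, one_mul, sqrt_mul_self' N]
    have hNne : (N:ℂ) ≠ 0 := by exact_mod_cast hN.ne'
    field_simp
  linear_combination s k * h1


lemma dft_add (N : ℕ) (hN : 0 < N) (k p m : Fin N) :
    dft N k (p + m) = (Real.sqrt N : ℂ) * dft N k p * dft N k m := by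
  have hsN : Real.sqrt N ≠ 0 := Real.sqrt_ne_zero'.mpr (by exact_mod_cast hN)
  rw [dft_apply_efn, dft_apply_efn, dft_apply_efn]
  have hval : ((p + m : Fin N) : ℕ) = ((p:ℕ) + (m:ℕ)) % N := by
    rw [Fin.add_def]
  have he : efn N (-(((k:ℕ):ℤ) * ((p+m : Fin N):ℕ)))
      = efn N (-(((k:ℕ):ℤ)*(p:ℕ))) * efn N (-(((k:ℕ):ℤ)*(m:ℕ))) := by
    rw [← efn_add]
    apply efn_congr N hN
    rw [hval]
    refine ⟨((k:ℕ):ℤ) * ((((p:ℕ)+(m:ℕ))/N : ℕ) : ℤ), ?_⟩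
    have hcast : (((p:ℕ)+(m:ℕ) : ℕ) : ℤ)
        = ((((p:ℕ)+(m:ℕ))%N : ℕ) : ℤ) + (N:ℤ) * ((((p:ℕ)+(m:ℕ))/N : ℕ) : ℤ) := by
      exact_mod_cast (Nat.mod_add_div ((p:ℕ)+(m:ℕ)) N).symm
    push_cast at hcast ⊢
    linear_combination ((k:ℕ):ℤ) * hcast
  rw [he]
  have hs : ((Real.sqrt N : ℝ) : ℂ) * ((1 / Real.sqrt N : ℝ) : ℂ) = 1 := by
    push_cast
    rw [mul_one_div, div_self (by exact_mod_cast hsN)]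
  linear_combination (-(((1 / Real.sqrt N : ℝ) : ℂ) * efn N (-(((k:ℕ):ℤ)*(p:ℕ)))
    * efn N (-(((k:ℕ):ℤ)*(m:ℕ))))) * hs

lemma dft_cconv (N : ℕ) (hN : 0 < N) (c x : Fin N → ℂ) (k : Fin N) :
    (dft N *ᵥ cconv c x) k = (Real.sqrt N : ℂ) * (dft N *ᵥ c) k * (dft N *ᵥ x) k := by
  haveI : NeZero N := ⟨hN.ne'⟩
  simp only [mulVec, dotProduct, cconv]
  have hre : ∀ m : Fin N, ∑ n : Fin N, dft N k n * (c m * x (n - m))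
      = ∑ p : Fin N, dft N k (p + m) * (c m * x p) := by
    intro m
    rw [← Equiv.sum_comp (Equiv.addRight m) (fun n => dft N k n * (c m * x (n - m)))]
    apply Finset.sum_congr rfl
    intro p _
    simp only [Equiv.coe_addRight, add_sub_cancel_right]
  calc ∑ n : Fin N, dft N k n * ∑ m : Fin N, c m * x (n - m)
      = ∑ n : Fin N, ∑ m : Fin N, dft N k n * (c m * x (n - m)) :=
        Finset.sum_congr rfl fun n _ => Finset.mul_sum _ _ _
    _ = ∑ m : Fin N, ∑ n : Fin N, dft N k n * (c m * x (n - m)) := Finset.sum_comm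
    _ = ∑ m : Fin N, ∑ p : Fin N, dft N k (p + m) * (c m * x p) :=
        Finset.sum_congr rfl fun m _ => hre m
    _ = ∑ m : Fin N, ∑ p : Fin N,
          (Real.sqrt N : ℂ) * (dft N k m * c m) * (dft N k p * x p) := by
        refine Finset.sum_congr rfl fun m _ => Finset.sum_congr rfl fun p _ => ?_
        rw [dft_add N hN k p m]; ring
    _ = (Real.sqrt N : ℂ) * (∑ m : Fin N, dft N k m * c m) * (∑ p : Fin N, dft N k p * x p) := by
        symm
        rw [mul_assoc, Finset.sum_mul_sum, Finset.mul_sum]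
        refine Finset.sum_congr rfl fun m _ => ?_
        rw [Finset.mul_sum]
        exact Finset.sum_congr rfl fun p _ => by ring



lemma toep_cp (N L P : ℕ) (hL : 1 ≤ L) (hLN : L ≤ N) (hP : L - 1 ≤ P) (hPN : P ≤ N)
    (h : Fin L → ℂ) (x : Fin N → ℂ) (n : Fin N) :
    (toep N P h *ᵥ cyclicPrefix N P hPN x) n = cconv (pad N hLN h) x n := by
  have hn := n.isLt
  simp only [mulVec, dotProduct, cconv]
  set em : Fin L ↪ Fin (N + P) :=
    ⟨fun l => ⟨P + (n : ℕ) - (l : ℕ), by have := l.isLt; omega⟩, by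
      intro a b hab
      have ha := a.isLt; have hb := b.isLt
      simp only [Fin.mk.injEq] at hab
      exact Fin.ext (by omega)⟩ with hem
  set emN : Fin L ↪ Fin N :=
    ⟨fun l => ⟨(l : ℕ), lt_of_lt_of_le l.isLt hLN⟩, by
      intro a b hab
      simp only [Fin.mk.injEq] at hab
      exact Fin.ext hab⟩ with hemN
  have hLHS : ∑ m : Fin (N + P), toep N P h n m * cyclicPrefix N P hPN x m
      = ∑ l : Fin L, toep N P h n (em l) * cyclicPrefix N P hPN x (em l) := by
    rw [← Finset.sum_map Finset.univ em
      (fun m => toep N P h n m * cyclicPrefix N P hPN x m)]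
    refine (Finset.sum_subset (Finset.subset_univ _) ?_).symm
    intro m _ hm
    have hz : toep N P h n m = 0 := by
      rw [toep, of_apply, dif_neg]
      intro ⟨h1, h2⟩
      apply hm
      rw [Finset.mem_map]
      refine ⟨⟨((P : ℤ) + (n : ℕ) - (m : ℕ)).toNat, by omega⟩, Finset.mem_univ _, ?_⟩
      apply Fin.ext
      show P + (n : ℕ) - _ = (m : ℕ)
      simp only [Fin.val_mk]
      omega
    rw [hz, zero_mul]
  have hRHS : ∑ l : Fin N, pad N hLN h l * x (n - l)
      = ∑ l : Fin L, pad N hLN h (emN l) * x (n - emN l) := by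
    rw [← Finset.sum_map Finset.univ emN (fun l => pad N hLN h l * x (n - l))]
    refine (Finset.sum_subset (Finset.subset_univ _) ?_).symm
    intro l _ hl
    have hz : pad N hLN h l = 0 := by
      rw [pad, dif_neg]
      intro hlt
      apply hl
      rw [Finset.mem_map]
      exact ⟨⟨(l : ℕ), hlt⟩, Finset.mem_univ _, Fin.ext rfl⟩
    rw [hz, zero_mul]
  rw [hLHS, hRHS]
  apply Finset.sum_congr rfl
  intro l _
  have hl := l.isLt
  have hemv : ((em l : Fin (N + P)) : ℕ) = P + (n : ℕ) - (l : ℕ) := rfl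
  have ht : toep N P h n (em l) = h l := by
    rw [toep, of_apply, dif_pos (by rw [hemv]; omega)]
    congr 1
    apply Fin.ext
    show ((P : ℤ) + (n : ℕ) - ((em l : Fin (N + P)) : ℕ)).toNat = (l : ℕ)
    rw [hemv]; omega
  have hp : pad N hLN h (emN l) = h l := by
    rw [pad, dif_pos (show ((emN l : Fin N) : ℕ) < L from hl)]
    exact congrArg h (Fin.ext rfl)
  have hsub : ((n - emN l : Fin N) : ℕ) = (N - (l : ℕ) + (n : ℕ)) % N := by
    rw [Fin.sub_def]
    rfl
  have hx : cyclicPrefix N P hPN x (em l) = x (n - emN l) := by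
    rw [cyclicPrefix]
    by_cases hc : ((em l : Fin (N + P)) : ℕ) < P
    · rw [dif_pos hc]
      congr 1
      apply Fin.ext
      show N - P + ((em l : Fin (N + P)) : ℕ) = ((n - emN l : Fin N) : ℕ)
      rw [hsub, hemv, Nat.mod_eq_of_lt (by rw [hemv] at hc; omega)]
      rw [hemv] at hc
      omega
    · rw [dif_neg hc]
      congr 1
      apply Fin.ext
      show ((em l : Fin (N + P)) : ℕ) - P = ((n - emN l : Fin N) : ℕ)
      rw [hemv] at hc ⊢
      have hln : (l : ℕ) ≤ (n : ℕ) := by omega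
      have : N - (l : ℕ) + (n : ℕ) = N + ((n : ℕ) - (l : ℕ)) := by omega
      rw [hsub, this, Nat.add_mod_left, Nat.mod_eq_of_lt (by omega)]
      omega
  rw [ht, hp, hx]


/-- OFDM: with `x = Fᴴ s` and cyclic prefix, the received OFDM symbol after
DFT equals `√N · diag(F pad(h)) · s`, i.e. `N` orthogonal ISI-free scalar subcarriers. -/
theorem stmt4 (N L P : ℕ) (hL : 1 ≤ L) (hLN : L ≤ N) (hP : L - 1 ≤ P) (hPN : P ≤ N)
    (h : Fin L → ℂ) (s : Fin N → ℂ) :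
    dft N *ᵥ (toep N P h *ᵥ cyclicPrefix N P hPN ((dft N)ᴴ *ᵥ s)) =
      fun k => (Real.sqrt N : ℂ) * (dft N *ᵥ pad N hLN h) k * s k := by
  have hN : 0 < N := lt_of_lt_of_le hL hLN
  have hc : toep N P h *ᵥ cyclicPrefix N P hPN ((dft N)ᴴ *ᵥ s)
      = cconv (pad N hLN h) ((dft N)ᴴ *ᵥ s) :=
    funext fun n => toep_cp N L P hL hLN hP hPN h ((dft N)ᴴ *ᵥ s) n
  funext k
  show (dft N *ᵥ (toep N P h *ᵥ cyclicPrefix N P hPN ((dft N)ᴴ *ᵥ s))) k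
      = (Real.sqrt N : ℂ) * (dft N *ᵥ pad N hLN h) k * s k
  rw [hc, dft_cconv N hN, dft_dft_conj N hN s k]
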